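/- Exact quadratic identity for the unnormalized KL up to second order: for probability densities p_s, p_t > 0 and a positive estimator r̂ with r = p_s/p_t, D̃_KL[p_s‖r̂·p_t] = (1/2)∫ (p_s(x) − r̂(x)p_t(x))²/p_s(x) dx + R, where D̃_KL[p‖q] = ∫p ln(p/q) − ∫p + ∫q and |R| ≤ C·∫ p_s(x)|r̂(x)/r(x) − 1|³ dx whenever r̂/r is bounded within [1−δ, 1+δ] for 0 < δ < 1, with C depending only on δ. -/

import Mathlib

open MeasureTheory

lemma kl_pointwise (δ : ℝ) (hδ1 : δ < 1) {a b c : ℝ} (ha : 0 < a) (hb : 0 < b)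
    (hc : 0 < c) (hmem : c / (a / b) ∈ Set.Icc (1 - δ) (1 + δ)) :
    |a * Real.log (a / (c * b)) - a + c * b -
        (1 / 2) * ((a - c * b) ^ 2 / a)| ≤
      (1 / (1 - δ)) * (a * |c / (a / b) - 1| ^ 3) := by
  set u : ℝ := c / (a / b) with hu
  have hudef : u = c * b / a := by
    rw [hu, div_div_eq_mul_div]
  have hxabs : |1 - u| ≤ δ := by
    rw [abs_le]
    constructor <;> [linarith [hmem.2]; linarith [hmem.1]]
  have hxlt : |1 - u| < 1 := lt_of_le_of_lt hxabs hδ1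
  have key := Real.abs_log_sub_add_sum_range_le hxlt 2
  have hsum : (∑ i ∈ Finset.range 2, (1 - u) ^ (i + 1) / (i + 1)) =
      (1 - u) + (1 - u) ^ 2 / 2 := by
    norm_num [Finset.sum_range_succ]
  rw [hsum] at key
  have h1u : (1 : ℝ) - (1 - u) = u := by ring
  rw [h1u] at key
  -- rewrite goal
  have hcb : 0 < c * b := mul_pos hc hb
  have hlog : Real.log (a / (c * b)) = - Real.log u := by
    rw [hudef, Real.log_div (mul_pos hc hb).ne' ha.ne', Real.log_div ha.ne' hcb.ne']
    ring
  have hq : (a - c * b) ^ 2 / a = a * (1 - u) ^ 2 := by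
    rw [hudef]
    field_simp
  have hcba : c * b = a * u := by
    rw [hudef]; field_simp
  have hrw : a * Real.log (a / (c * b)) - a + c * b -
      (1 / 2) * ((a - c * b) ^ 2 / a) =
      -(a * ((1 - u) + (1 - u) ^ 2 / 2 + Real.log u)) := by
    rw [hlog, hq, hcba]; ring
  rw [hrw, abs_neg, abs_mul, abs_of_pos ha]
  have hbd : |(1 - u) + (1 - u) ^ 2 / 2 + Real.log u| ≤ |1 - u| ^ 3 / (1 - δ) := by
    refine key.trans ?_
    apply div_le_div_of_nonneg_left (by positivity) (by linarith) (by linarith)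
  calc a * |(1 - u) + (1 - u) ^ 2 / 2 + Real.log u|
      ≤ a * (|1 - u| ^ 3 / (1 - δ)) := by gcongr
    _ = (1 / (1 - δ)) * (a * |u - 1| ^ 3) := by
        rw [show |1 - u| = |u - 1| by rw [abs_sub_comm]]; ring

/-- The unnormalized KL divergence equals the Pearson-type quadratic term up to a
cubic remainder, uniformly over estimators with ratio in `[1-δ, 1+δ]`. -/
theorem unnormalized_kl_quadratic {X : Type*} [MeasurableSpace X]
    (δ : ℝ) (hδ : 0 < δ) (hδ1 : δ < 1) :
    ∃ C : ℝ, 0 < C ∧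
      ∀ (μ : Measure X) (ps pt rhat : X → ℝ),
        (∀ x, 0 < ps x) → (∀ x, 0 < pt x) → (∀ x, 0 < rhat x) →
        (∫ x, ps x ∂μ) = 1 → (∫ x, pt x ∂μ) = 1 →
        (∀ x, rhat x / (ps x / pt x) ∈ Set.Icc (1 - δ) (1 + δ)) →
        Integrable (fun x => ps x * Real.log (ps x / (rhat x * pt x))) μ →
        Integrable (fun x => rhat x * pt x) μ →
        Integrable (fun x => (ps x - rhat x * pt x) ^ 2 / ps x) μ →
        Integrable (fun x => ps x * |rhat x / (ps x / pt x) - 1| ^ 3) μ →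
        |((∫ x, ps x * Real.log (ps x / (rhat x * pt x)) ∂μ) - 1 +
            (∫ x, rhat x * pt x ∂μ)) -
          (1 / 2) * ∫ x, (ps x - rhat x * pt x) ^ 2 / ps x ∂μ| ≤
          C * ∫ x, ps x * |rhat x / (ps x / pt x) - 1| ^ 3 ∂μ := by
  have h1δ : (0:ℝ) < 1 - δ := by linarith
  refine ⟨1 / (1 - δ), by positivity, ?_⟩
  intro μ ps pt rhat hps hpt hrhat hips hipt hmem hI1 hI2 hI3 hI4
  have hps_int : Integrable ps μ := integrable_of_integral_eq_one hips
  set H : X → ℝ := fun x => ps x * Real.log (ps x / (rhat x * pt x)) - ps x +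
      rhat x * pt x - (1 / 2) * ((ps x - rhat x * pt x) ^ 2 / ps x) with hH
  have hHint : Integrable H μ := by
    exact ((hI1.sub hps_int).add hI2).sub (hI3.const_mul _)
  have hIeq : ((∫ x, ps x * Real.log (ps x / (rhat x * pt x)) ∂μ) - 1 +
      (∫ x, rhat x * pt x ∂μ)) -
      (1 / 2) * ∫ x, (ps x - rhat x * pt x) ^ 2 / ps x ∂μ = ∫ x, H x ∂μ := by
    have hA : Integrable (fun x => ps x * Real.log (ps x / (rhat x * pt x)) - ps x) μ :=
      hI1.sub hps_int
    have hB : Integrable (fun x => ps x * Real.log (ps x / (rhat x * pt x)) - ps x +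
        rhat x * pt x) μ := hA.add hI2
    have hC : Integrable (fun x => (1 / 2 : ℝ) * ((ps x - rhat x * pt x) ^ 2 / ps x)) μ :=
      hI3.const_mul _
    rw [hH]
    rw [integral_sub hB hC, integral_add hA hI2, integral_sub hI1 hps_int,
      integral_const_mul, hips]
  rw [hIeq]
  calc |∫ x, H x ∂μ| ≤ ∫ x, |H x| ∂μ := by simpa using norm_integral_le_integral_norm H
    _ ≤ ∫ x, (1 / (1 - δ)) * (ps x * |rhat x / (ps x / pt x) - 1| ^ 3) ∂μ := by
        refine integral_mono hHint.abs (hI4.const_mul _) fun x => ?_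
        exact kl_pointwise δ hδ1 (hps x) (hpt x) (hrhat x) (hmem x)
    _ = (1 / (1 - δ)) * ∫ x, ps x * |rhat x / (ps x / pt x) - 1| ^ 3 ∂μ :=
        integral_const_mul _ _
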